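/- Uniqueness of the translation maximizer: for γ, τ₁, τ₂ > 0, positive reals A₁, A₂, S, the function φ(λ₁, λ₂) = −τ₁ A₁ exp(−λ₁/τ₁) − τ₂ A₂ exp(−λ₂/τ₂) − (1/γ) S exp(γ(λ₁+λ₂)) is strictly concave on ℝ² and attains a unique maximum, characterized by the stationarity equations A₁ exp(−λ₁/τ₁) = S exp(γ(λ₁+λ₂)) and A₂ exp(−λ₂/τ₂) = S exp(γ(λ₁+λ₂)). -/

import Mathlib

open Real

/-- Tangent-line inequality for `x ↦ -(c t) exp(x/t)`. -/
lemma key_tangent (c t : ℝ) (hc : 0 < c) (ht : 0 < t) (x y : ℝ) :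
    -(c*t) * Real.exp (x/t) ≤ -(c*t) * Real.exp (y/t) - c * Real.exp (y/t) * (x - y) := by
  have h := Real.add_one_le_exp ((x - y)/t)
  have hE := Real.exp_pos (y/t)
  have e : Real.exp (x/t) = Real.exp (y/t) * Real.exp ((x-y)/t) := by
    rw [← Real.exp_add]; ring_nf
  have h2 : Real.exp (y/t) * ((x-y)/t + 1) ≤ Real.exp (x/t) := by
    rw [e]; nlinarith
  have h3 : (c*t) * (Real.exp (y/t) * ((x-y)/t + 1)) ≤ (c*t) * Real.exp (x/t) :=
    mul_le_mul_of_nonneg_left h2 (le_of_lt (mul_pos hc ht))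
  have h5 : (c*t) * (Real.exp (y/t) * ((x-y)/t + 1))
      = (c*t) * Real.exp (y/t) + c * Real.exp (y/t) * (x - y) := by
    field_simp; ring
  linarith [h3, h5.symm.le]

lemma exp_term_concave (c : ℝ) (hc : 0 < c) (u v : ℝ) (a b : ℝ)
    (ha : 0 < a) (hb : 0 < b) (hab : a + b = 1) :
    a * (-c * Real.exp u) + b * (-c * Real.exp v) ≤ -c * Real.exp (a*u + b*v) := by
  have := convexOn_exp.2 (Set.mem_univ u) (Set.mem_univ v) ha.le hb.le hab
  simp only [smul_eq_mul] at this
  nlinarith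

lemma exp_term_strict (c : ℝ) (hc : 0 < c) (u v : ℝ) (huv : u ≠ v) (a b : ℝ)
    (ha : 0 < a) (hb : 0 < b) (hab : a + b = 1) :
    a * (-c * Real.exp u) + b * (-c * Real.exp v) < -c * Real.exp (a*u + b*v) := by
  have := strictConvexOn_exp.2 (Set.mem_univ u) (Set.mem_univ v) huv ha hb hab
  simp only [smul_eq_mul] at this
  nlinarith

set_option maxHeartbeats 1000000 in
theorem translation_maximizer_unique (γ τ₁ τ₂ A₁ A₂ S : ℝ)
    (hγ : 0 < γ) (hτ₁ : 0 < τ₁) (hτ₂ : 0 < τ₂)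
    (hA₁ : 0 < A₁) (hA₂ : 0 < A₂) (hS : 0 < S) :
    let φ : ℝ × ℝ → ℝ := fun p =>
      -τ₁ * A₁ * Real.exp (-p.1 / τ₁) - τ₂ * A₂ * Real.exp (-p.2 / τ₂) -
      (1/γ) * S * Real.exp (γ * (p.1 + p.2))
    StrictConcaveOn ℝ Set.univ φ ∧
    (∃! p : ℝ × ℝ, ∀ q, φ q ≤ φ p) ∧
    (∀ p : ℝ × ℝ, (∀ q, φ q ≤ φ p) ↔
      (A₁ * Real.exp (-p.1 / τ₁) = S * Real.exp (γ * (p.1 + p.2)) ∧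
       A₂ * Real.exp (-p.2 / τ₂) = S * Real.exp (γ * (p.1 + p.2)))) := by
  intro φ
  -- Strict concavity
  have hconc : StrictConcaveOn ℝ Set.univ φ := by
    refine ⟨convex_univ, ?_⟩
    rintro p - q - hpq a b ha hb hab
    simp only [smul_eq_mul, Prod.smul_fst, Prod.smul_snd, Prod.fst_add, Prod.snd_add,
      Prod.smul_mk]
    have e1 : (-((a • p + b • q).1) / τ₁) = a * (-p.1/τ₁) + b * (-q.1/τ₁) := by
      simp [Prod.smul_fst]; field_simp; ring
    have e2 : (-((a • p + b • q).2) / τ₂) = a * (-p.2/τ₂) + b * (-q.2/τ₂) := by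
      simp [Prod.smul_snd]; field_simp; ring
    have e3 : (γ * ((a • p + b • q).1 + (a • p + b • q).2))
        = a * (γ * (p.1 + p.2)) + b * (γ * (q.1 + q.2)) := by
      simp [Prod.smul_fst, Prod.smul_snd]; nlinarith [hab]
    have t1w := exp_term_concave (τ₁*A₁) (mul_pos hτ₁ hA₁) (-p.1/τ₁) (-q.1/τ₁) a b ha hb hab
    have t2w := exp_term_concave (τ₂*A₂) (mul_pos hτ₂ hA₂) (-p.2/τ₂) (-q.2/τ₂) a b ha hb hab
    have t3w := exp_term_concave ((1/γ)*S) (mul_pos (one_div_pos.mpr hγ) hS)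
      (γ*(p.1+p.2)) (γ*(q.1+q.2)) a b ha hb hab
    have hstrict : a * φ p + b * φ q < φ (a • p + b • q) := by
      show a * φ p + b * φ q <
        -τ₁ * A₁ * Real.exp (-((a • p + b • q).1) / τ₁)
        - τ₂ * A₂ * Real.exp (-((a • p + b • q).2) / τ₂)
        - (1/γ) * S * Real.exp (γ * ((a • p + b • q).1 + (a • p + b • q).2))
      rw [e1, e2, e3]
      rcases ne_or_eq p.1 q.1 with h1 | h1
      · have h1' : (-p.1/τ₁) ≠ (-q.1/τ₁) := by
          intro h; apply h1
          field_simp at h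
          linarith
        have t1 := exp_term_strict (τ₁*A₁) (mul_pos hτ₁ hA₁) _ _ h1' a b ha hb hab
        simp only [φ]; nlinarith [t1, t2w, t3w]
      · have h2 : p.2 ≠ q.2 := by
          intro h; exact hpq (Prod.ext h1 h)
        have h2' : (-p.2/τ₂) ≠ (-q.2/τ₂) := by
          intro h; apply h2
          field_simp at h
          linarith
        have t2 := exp_term_strict (τ₂*A₂) (mul_pos hτ₂ hA₂) _ _ h2' a b ha hb hab
        simp only [φ]; nlinarith [t1w, t2, t3w]
    exact hstrict
  -- stationarity implies global maximum
  have hstat_max : ∀ p : ℝ × ℝ,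
      (A₁ * Real.exp (-p.1 / τ₁) = S * Real.exp (γ * (p.1 + p.2)) ∧
       A₂ * Real.exp (-p.2 / τ₂) = S * Real.exp (γ * (p.1 + p.2))) →
      ∀ q, φ q ≤ φ p := by
    rintro p ⟨h1, h2⟩ q
    have k1 := key_tangent A₁ τ₁ hA₁ hτ₁ (-q.1) (-p.1)
    have k2 := key_tangent A₂ τ₂ hA₂ hτ₂ (-q.2) (-p.2)
    have k3 := key_tangent S (1/γ) hS (one_div_pos.mpr hγ) (q.1+q.2) (p.1+p.2)
    have hg : γ ≠ 0 := ne_of_gt hγ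
    have r1 : (q.1+q.2)/(1/γ) = γ * (q.1+q.2) := by field_simp
    have r2 : (p.1+p.2)/(1/γ) = γ * (p.1+p.2) := by field_simp
    rw [r1, r2] at k3
    simp only [φ]
    have E1 : -(A₁*τ₁) * Real.exp (-q.1/τ₁) ≤
        -(A₁*τ₁) * Real.exp (-p.1/τ₁) - A₁ * Real.exp (-p.1/τ₁) * (-q.1 - -p.1) := k1
    have E3 : -(S*(1/γ)) * Real.exp (γ*(q.1+q.2)) ≤
        -(S*(1/γ)) * Real.exp (γ*(p.1+p.2))
          - S * Real.exp (γ*(p.1+p.2)) * ((q.1+q.2) - (p.1+p.2)) := k3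
    have c1 : A₁ * Real.exp (-p.1/τ₁) * (-q.1 - -p.1)
        = S * Real.exp (γ*(p.1+p.2)) * (-q.1 - -p.1) := by rw [h1]
    have c2 : A₂ * Real.exp (-p.2/τ₂) * (-q.2 - -p.2)
        = S * Real.exp (γ*(p.1+p.2)) * (-q.2 - -p.2) := by rw [h2]
    linarith [k1, k2, E3, c1.le, c1.ge, c2.le, c2.ge]
  -- existence of a stationary point
  obtain ⟨p₀, hp₀⟩ : ∃ p : ℝ × ℝ,
      A₁ * Real.exp (-p.1 / τ₁) = S * Real.exp (γ * (p.1 + p.2)) ∧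
      A₂ * Real.exp (-p.2 / τ₂) = S * Real.exp (γ * (p.1 + p.2)) := by
    set c₁ := Real.log A₁ - Real.log S with hc₁
    set c₂ := Real.log A₂ - Real.log S with hc₂
    set α := 1/τ₁ + γ with hα
    set β := 1/τ₂ + γ with hβ
    have hD : α * β - γ^2 > 0 := by
      have : α * β - γ^2 = 1/(τ₁*τ₂) + γ/τ₁ + γ/τ₂ := by
        simp only [hα, hβ]; field_simp; ring
      rw [this]; positivity
    set D := α * β - γ^2 with hDdef
    have hDne : D ≠ 0 := ne_of_gt hD
    have hl1 : α * ((β*c₁-γ*c₂)/D) + γ * ((α*c₂-γ*c₁)/D) = c₁ := by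
      field_simp
      linear_combination c₁ * hDdef.symm
    have hl2 : γ * ((β*c₁-γ*c₂)/D) + β * ((α*c₂-γ*c₁)/D) = c₂ := by
      field_simp
      linear_combination c₂ * hDdef.symm
    simp only [hα, hβ, hc₁, hc₂] at hl1 hl2
    refine ⟨((β*c₁ - γ*c₂)/D, (α*c₂ - γ*c₁)/D), ?_, ?_⟩
    · simp only
      rw [show A₁ = Real.exp (Real.log A₁) from (Real.exp_log hA₁).symm,
          show S = Real.exp (Real.log S) from (Real.exp_log hS).symm,
          ← Real.exp_add, ← Real.exp_add]
      congr 1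
      simp only [hα, hβ, hc₁, hc₂]
      linear_combination -hl1
    · simp only
      rw [show A₂ = Real.exp (Real.log A₂) from (Real.exp_log hA₂).symm,
          show S = Real.exp (Real.log S) from (Real.exp_log hS).symm,
          ← Real.exp_add, ← Real.exp_add]
      congr 1
      simp only [hα, hβ, hc₁, hc₂]
      linear_combination -hl2
  have hp₀max := hstat_max p₀ hp₀
  -- unique maximizer from strict concavity
  have huniq : ∀ p : ℝ × ℝ, (∀ q, φ q ≤ φ p) → p = p₀ := by
    intro p hp
    exact hconc.eq_of_isMaxOn (fun y _ => hp y) (fun y _ => hp₀max y)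
      (Set.mem_univ p) (Set.mem_univ p₀)
  refine ⟨hconc, ⟨p₀, hp₀max, huniq⟩, ?_⟩
  intro p
  constructor
  · intro hp
    rw [huniq p hp]; exact hp₀
  · exact hstat_max p
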